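/- Let p be a positive integer, s an integer, and α₁⁰, α₂⁰ integers with gcd(α₁⁰,α₂⁰) = 1. Set u := gcd(p, sα₁⁰ − α₂⁰) and suppose u = gcd(p, sα₂⁰ − α₁⁰). Then u divides s² − 1. Moreover, if α := p/u and β₁ is an integer with gcd(α,β₁) = 1 and p divides β₁(1 − s²), then p divides 1 − s². -/

import Mathlib

/-- If `u = gcd(p, sα₁⁰ − α₂⁰) = gcd(p, sα₂⁰ − α₁⁰)` with `gcd(α₁⁰,α₂⁰) = 1`,
then `u` divides `s² − 1`; moreover for `α = p/u` and any `β₁` with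
`gcd(α,β₁) = 1`, the divisibility `p ∣ β₁(1 − s²)` forces `p ∣ 1 − s²`. -/
theorem case_B_divisibility (p : ℤ) (hp : 0 < p) (s α₁₀ α₂₀ : ℤ)
    (hcop : Int.gcd α₁₀ α₂₀ = 1)
    (u : ℤ) (hu : u = Int.gcd p (s * α₁₀ - α₂₀))
    (hu' : u = Int.gcd p (s * α₂₀ - α₁₀)) :
    u ∣ s ^ 2 - 1 ∧
      ∀ β₁ : ℤ, Int.gcd (p / u) β₁ = 1 → p ∣ β₁ * (1 - s ^ 2) → p ∣ 1 - s ^ 2 := by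
  have hup : u ∣ p := hu ▸ Int.gcd_dvd_left p (s * α₁₀ - α₂₀)
  have h1 : u ∣ s * α₁₀ - α₂₀ := hu ▸ Int.gcd_dvd_right p (s * α₁₀ - α₂₀)
  have h2 : u ∣ s * α₂₀ - α₁₀ := hu' ▸ Int.gcd_dvd_right p (s * α₂₀ - α₁₀)
  have hA : u ∣ (s ^ 2 - 1) * α₁₀ := by
    have : u ∣ s * (s * α₁₀ - α₂₀) + (s * α₂₀ - α₁₀) := dvd_add (h1.mul_left s) h2
    convert this using 1; ring
  have hB : u ∣ (s ^ 2 - 1) * α₂₀ := by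
    have : u ∣ s * α₁₀ - α₂₀ + s * (s * α₂₀ - α₁₀) := dvd_add h1 (h2.mul_left s)
    convert this using 1; ring
  have hmain : u ∣ s ^ 2 - 1 := by
    have hg := Int.dvd_coe_gcd hA hB
    rw [Int.gcd_mul_left, hcop, mul_one] at hg
    exact Int.dvd_natAbs.mp (by exact_mod_cast hg)
  refine ⟨hmain, fun β₁ hc hdvd => ?_⟩
  have hu0 : 0 < u := by
    rw [hu]
    exact_mod_cast Int.gcd_pos_of_ne_zero_left _ hp.ne'
  obtain ⟨t, ht⟩ := hmain
  have hpe : p = (p / u) * u := (Int.ediv_mul_cancel hup).symm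
  have h1s : 1 - s ^ 2 = (-t) * u := by rw [← neg_sub (s^2) 1, ht]; ring
  have hdvd2 : (p / u) * u ∣ (β₁ * (-t)) * u := by
    rw [← hpe]; convert hdvd using 1; rw [h1s]; ring
  have hdvd3 : (p / u) ∣ β₁ * (-t) :=
    (mul_dvd_mul_iff_right hu0.ne').mp hdvd2
  have hcop' : IsCoprime (p / u) β₁ := Int.isCoprime_iff_gcd_eq_one.mpr hc
  have : (p / u) ∣ (-t) := hcop'.dvd_of_dvd_mul_left hdvd3
  rw [hpe, h1s]
  exact mul_dvd_mul_right this u
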